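/- Let γ ≥ 1 and C ≥ 0, and let g : ℝ^d → ℝ^d be twice continuously differentiable with ‖D²g(x)(v₁, v₂)‖² ≤ C(1 + ‖x‖)^{γ−3}‖v₁‖²·‖v₂‖² for all x, v₁, v₂ ∈ ℝ^d. Then for all x, x̃, v ∈ ℝ^d, with the same constant C: ‖Dg(x)v − Dg(x̃)v‖² ≤ C·max{1, (1 + ‖x‖ + ‖x̃‖)^{γ−3}}·‖x − x̃‖²·‖v‖². -/

import Mathlib

/-- If the second derivative of `g` satisfies a squared polynomial growth
bound with constant `C`, then the first derivative is locally Lipschitz in the corresponding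
squared, polynomially weighted sense (same constant `C`). -/
theorem stmt_5 {d : ℕ} (γ C : ℝ) (hγ : 1 ≤ γ) (hC : 0 ≤ C)
    (g : EuclideanSpace ℝ (Fin d) → EuclideanSpace ℝ (Fin d))
    (hg : ContDiff ℝ 2 g)
    (hD2g : ∀ x v₁ v₂ : EuclideanSpace ℝ (Fin d),
      ‖iteratedFDeriv ℝ 2 g x ![v₁, v₂]‖ ^ 2 ≤
        C * (1 + ‖x‖) ^ (γ - 3) * ‖v₁‖ ^ 2 * ‖v₂‖ ^ 2) :
    ∀ x x' v : EuclideanSpace ℝ (Fin d),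
      ‖fderiv ℝ g x v - fderiv ℝ g x' v‖ ^ 2 ≤
        C * max 1 ((1 + ‖x‖ + ‖x'‖) ^ (γ - 3)) * ‖x - x'‖ ^ 2 * ‖v‖ ^ 2 := by
  intro x x' v
  set M : ℝ := max 1 ((1 + ‖x‖ + ‖x'‖) ^ (γ - 3)) with hM
  have hM1 : (1 : ℝ) ≤ M := le_max_left _ _
  have hM0 : 0 ≤ M := by linarith
  have hCM : 0 ≤ C * M := mul_nonneg hC hM0
  set K : ℝ := Real.sqrt (C * M) * ‖v‖ with hK
  have hK0 : 0 ≤ K := mul_nonneg (Real.sqrt_nonneg _) (norm_nonneg _)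
  have hF : ContDiff ℝ 1 (fderiv ℝ g) := hg.fderiv_right (by norm_num)
  -- the function y ↦ fderiv g y v
  set h : EuclideanSpace ℝ (Fin d) → EuclideanSpace ℝ (Fin d) := fun y => fderiv ℝ g y v with hh
  set h' : EuclideanSpace ℝ (Fin d) → (EuclideanSpace ℝ (Fin d) →L[ℝ] EuclideanSpace ℝ (Fin d)) := fun y =>
    (ContinuousLinearMap.apply ℝ (EuclideanSpace ℝ (Fin d)) v).comp (fderiv ℝ (fderiv ℝ g) y) with hh'
  have hasD : ∀ y ∈ segment ℝ x' x, HasFDerivWithinAt h (h' y) (segment ℝ x' x) y := by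
    intro y _
    exact (((ContinuousLinearMap.apply ℝ (EuclideanSpace ℝ (Fin d)) v).hasFDerivAt.comp y
      (hF.differentiable one_ne_zero y).hasFDerivAt)).hasFDerivWithinAt
  have hbound : ∀ y ∈ segment ℝ x' x, ‖h' y‖ ≤ K := by
    intro y hy
    obtain ⟨a, b, ha, hb, hab, rfl⟩ := hy
    have hynorm : ‖a • x' + b • x‖ ≤ ‖x‖ + ‖x'‖ := by
      calc ‖a • x' + b • x‖ ≤ a * ‖x'‖ + b * ‖x‖ := by
            refine (norm_add_le _ _).trans ?_
            rw [norm_smul, norm_smul, Real.norm_of_nonneg ha, Real.norm_of_nonneg hb]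
        _ ≤ a * (‖x‖ + ‖x'‖) + b * (‖x‖ + ‖x'‖) := by
            gcongr <;> [linarith [norm_nonneg x]; linarith [norm_nonneg x']]
        _ = ‖x‖ + ‖x'‖ := by rw [← add_mul, hab, one_mul]
    set y := a • x' + b • x
    have hrpow : (1 + ‖y‖) ^ (γ - 3) ≤ M := by
      rcases le_or_gt 3 γ with h3 | h3
      · refine le_trans ?_ (le_max_right _ _)
        exact Real.rpow_le_rpow (by positivity) (by linarith) (by linarith)
      · refine le_trans ?_ (le_max_left _ _)
        exact Real.rpow_le_one_of_one_le_of_nonpos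
          (by linarith [norm_nonneg y]) (by linarith)
    refine ContinuousLinearMap.opNorm_le_bound _ hK0 fun w => ?_
    have key : ‖fderiv ℝ (fderiv ℝ g) y w v‖ ≤ K * ‖w‖ := by
      have h2 : ‖iteratedFDeriv ℝ 2 g y ![w, v]‖ ^ 2 ≤ (K * ‖w‖) ^ 2 := by
        calc ‖iteratedFDeriv ℝ 2 g y ![w, v]‖ ^ 2
            ≤ C * (1 + ‖y‖) ^ (γ - 3) * ‖w‖ ^ 2 * ‖v‖ ^ 2 := hD2g y w v
          _ ≤ C * M * ‖w‖ ^ 2 * ‖v‖ ^ 2 := by gcongr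
          _ = (K * ‖w‖) ^ 2 := by
              rw [hK]; rw [mul_pow, mul_pow, Real.sq_sqrt hCM]; ring
      have := (pow_le_pow_iff_left₀ (norm_nonneg _)
        (mul_nonneg hK0 (norm_nonneg w)) (two_ne_zero)).mp h2
      rwa [iteratedFDeriv_two_apply] at this
      done
    simpa [hh', ContinuousLinearMap.comp_apply] using key
  have main := (convex_segment x' x).norm_image_sub_le_of_norm_hasFDerivWithin_le
    hasD hbound (left_mem_segment ℝ x' x) (right_mem_segment ℝ x' x)
  -- main : ‖h x - h x'‖ ≤ K * ‖x - x'‖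
  have sq : ‖h x - h x'‖ ^ 2 ≤ (K * ‖x - x'‖) ^ 2 := by
    exact pow_le_pow_left₀ (norm_nonneg _) main 2
  calc ‖fderiv ℝ g x v - fderiv ℝ g x' v‖ ^ 2 = ‖h x - h x'‖ ^ 2 := rfl
    _ ≤ (K * ‖x - x'‖) ^ 2 := sq
    _ = C * M * ‖x - x'‖ ^ 2 * ‖v‖ ^ 2 := by
        rw [hK, mul_pow, mul_pow, Real.sq_sqrt hCM]; ring
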